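/- Let d_1 ≥ 2 and consider the homogeneous polynomials in variables z_1,…,z_k and z_ν (ν of degree-2 multi-indices): f_d = ((−1)^{d−1}/d) Σ_{i: d_i = d} b_i z_i^d and f_{d−1} = ((−1)^{d−2}/(d−1)) Σ_{i: d_i = d−1} b_i z_i^{d−1} + (−1)^{d−2} b_1 z_{2e_1} z_1^{d−2}, where d = d_1 = max d_i, all b_i ≠ 0, and d_1 = d only for i = 1. Then the squarefree-reduced polynomial of f_d (which is a scalar times z_1^{d−1}) is coprime to f_{d−1} if and only if d = 2 or some d_i equals d−1 for i ≥ 2. -/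

import Mathlib

open MvPolynomial

/-- `X (some 0)` is prime in a multivariate polynomial ring over a field. -/
lemma aux_prime_X0 (K : Type*) [Field K] (k : ℕ) :
    Prime (X (Option.some (0 : Fin (k+1))) : MvPolynomial (Option (Fin (k+1))) K) := by
  let e := (renameEquiv K (Equiv.swap (Option.none) (Option.some (0:Fin (k+1))))).trans
    (optionEquivLeft K (Fin (k+1)))
  rw [← MulEquiv.prime_iff e]
  have he : e (X (Option.some 0)) = Polynomial.X := by
    simp [e, renameEquiv_apply, rename_X, Equiv.swap_apply_right, optionEquivLeft_X_none]
  show Prime (e (X (Option.some 0)))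
  rw [he]
  exact Polynomial.prime_X

/-- If `X s` divides `p`, then coefficients at monomials not containing `s` vanish. -/
lemma aux_coeff_of_X_dvd {σ K : Type*} [CommRing K] [DecidableEq σ] {s : σ}
    {p : MvPolynomial σ K} (h : X s ∣ p) (m : σ →₀ ℕ) (hm : m s = 0) :
    coeff m p = 0 := by
  obtain ⟨r, rfl⟩ := h
  rw [coeff_X_mul', if_neg]
  simp [Finsupp.mem_support_iff, hm]

/-- For the ray diagram data `d_1 ≥ … ≥ d_k ≥ 2` with `d := d_1` attained only at `i = 1`
and nonzero scalars `b_i`, set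
`f_d = ((−1)^{d−1}/d) Σ_{i : d_i = d} b_i z_i^d` (a scalar times `z_1^d`), with squarefree
reduction `f̃_d` a scalar times `z_1^{d−1}`, and
`f_{d−1} = ((−1)^{d−2}/(d−1)) Σ_{i : d_i = d−1} b_i z_i^{d−1} + (−1)^{d−2} b_1 z_{2e_1} z_1^{d−2}`.
Then `f̃_d` and `f_{d−1}` are coprime (no common non-unit divisor) if and only if `d = 2` or
some `d_i` with `i ≥ 2` equals `d − 1`. Here the variable `X none` plays the role of
`z_{2e_1}` and `X (some i)` the role of `z_{i+1}`. -/
theorem ray_hypersurface_normality_criterion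
    (K : Type*) [Field K] [IsAlgClosed K] [CharZero K] (k : ℕ)
    (dd : Fin (k + 1) → ℕ) (b : Fin (k + 1) → K) (d : ℕ) (hdd : d = dd 0)
    (hsort : ∀ i j : Fin (k + 1), i ≤ j → dd j ≤ dd i)
    (hd2 : ∀ i, 2 ≤ dd i) (hb : ∀ i, b i ≠ 0)
    (hmax : ∀ i : Fin (k + 1), i ≠ 0 → dd i < d)
    (ftd fd1 : MvPolynomial (Option (Fin (k + 1))) K)
    (hftd : ftd = C ((-1 : K) ^ (d - 1) / (d : K) * b 0) * X (Option.some 0) ^ (d - 1))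
    (hfd1 : fd1 =
      C ((-1 : K) ^ (d - 2) / ((d - 1 : ℕ) : K)) *
        (∑ i ∈ Finset.univ.filter (fun i : Fin (k + 1) => dd i = d - 1),
          C (b i) * X (Option.some i) ^ (d - 1)) +
      C ((-1 : K) ^ (d - 2) * b 0) * X Option.none * X (Option.some 0) ^ (d - 2)) :
    (∀ q : MvPolynomial (Option (Fin (k + 1))) K, q ∣ ftd → q ∣ fd1 → IsUnit q) ↔
      (d = 2 ∨ ∃ i : Fin (k + 1), i ≠ 0 ∧ dd i = d - 1) := by
  classical
  have hd : 2 ≤ d := hdd ▸ hd2 0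
  have hX0 : Prime (X (Option.some (0 : Fin (k+1))) : MvPolynomial (Option (Fin (k+1))) K) :=
    aux_prime_X0 K k
  constructor
  · -- coprime → criterion
    intro hcop
    by_contra hcon
    push_neg at hcon
    obtain ⟨hne2, hnone⟩ := hcon
    have hempty : Finset.univ.filter (fun i : Fin (k + 1) => dd i = d - 1) = ∅ := by
      refine Finset.filter_eq_empty_iff.mpr ?_
      intro i _
      by_cases hi : i = 0
      · subst hi; omega
      · exact fun h => (hnone i hi) h
    have h1 : X (Option.some (0 : Fin (k+1))) ∣ ftd := by
      rw [hftd]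
      exact Dvd.dvd.mul_left (dvd_pow_self _ (by omega)) _
    have h2 : X (Option.some (0 : Fin (k+1))) ∣ fd1 := by
      rw [hfd1, hempty]
      simp only [Finset.sum_empty, mul_zero, zero_add]
      exact Dvd.dvd.mul_left (dvd_pow_self _ (by omega)) _
    exact hX0.not_unit (hcop _ h1 h2)
  · -- criterion → coprime
    intro hcrit q hq1 hq2
    by_contra hqu
    -- step 1: X (some 0) divides fd1
    have hc : ((-1 : K) ^ (d - 1) / (d : K) * b 0) ≠ 0 :=
      mul_ne_zero (div_ne_zero (pow_ne_zero _ (neg_ne_zero.mpr one_ne_zero))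
        (Nat.cast_ne_zero.mpr (by omega))) (hb 0)
    have hCu : IsUnit (C ((-1 : K) ^ (d - 1) / (d : K) * b 0) :
        MvPolynomial (Option (Fin (k+1))) K) := (isUnit_iff_ne_zero.mpr hc).map C
    have hqpow : q ∣ X (Option.some (0 : Fin (k+1))) ^ (d - 1) := by
      have heq : (X (Option.some (0 : Fin (k+1))) : MvPolynomial (Option (Fin (k+1))) K)
          ^ (d - 1) = C ((-1 : K) ^ (d - 1) / (d : K) * b 0)⁻¹ * ftd := by
        rw [hftd, ← mul_assoc, ← C_mul, inv_mul_cancel₀ hc, C_1, one_mul]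
      rw [heq]
      exact hq1.mul_left _
    obtain ⟨i, _, hassoc⟩ := (dvd_prime_pow hX0 _).mp hqpow
    have hi0 : i ≠ 0 := by
      rintro rfl
      exact hqu (associated_one_iff_isUnit.mp (by simpa using hassoc))
    have hXfd1 : X (Option.some (0 : Fin (k+1))) ∣ fd1 :=
      ((dvd_pow_self _ hi0).trans hassoc.symm.dvd).trans hq2
    -- step 2: derive a contradiction via a coefficient computation
    rcases hcrit with hdeq | ⟨i₀, hi₀0, hi₀⟩
    · -- d = 2 : look at the coefficient of the monomial `z_{2e_1}`
      have hempty : Finset.univ.filter (fun i : Fin (k + 1) => dd i = d - 1) = ∅ := by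
        refine Finset.filter_eq_empty_iff.mpr ?_
        intro i _
        have := hd2 i
        omega
      have hco := aux_coeff_of_X_dvd hXfd1 (Finsupp.single Option.none 1) (by simp)
      rw [hfd1, hempty] at hco
      simp only [Finset.sum_empty, mul_zero, zero_add, hdeq] at hco
      norm_num at hco
      exact hb 0 hco
    · -- some dd i₀ = d - 1 : look at the coefficient of `z_{i₀}^{d-1}`
      have hmem : i₀ ∈ Finset.univ.filter (fun i : Fin (k + 1) => dd i = d - 1) := by
        simp [hi₀]
      have hco := aux_coeff_of_X_dvd hXfd1 (Finsupp.single (Option.some i₀) (d - 1))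
        (by
          rw [Finsupp.single_apply, if_neg]
          simp [hi₀0])
      rw [hfd1] at hco
      rw [coeff_add, coeff_C_mul, coeff_sum] at hco
      have hsum : ∑ i ∈ Finset.univ.filter (fun i : Fin (k + 1) => dd i = d - 1),
          coeff (Finsupp.single (Option.some i₀) (d - 1))
            (C (b i) * X (Option.some i) ^ (d - 1)) = b i₀ := by
        rw [Finset.sum_eq_single i₀]
        · rw [coeff_C_mul, coeff_X_pow, if_pos rfl, mul_one]
        · intro i _ hne
          rw [coeff_C_mul, coeff_X_pow, if_neg, mul_zero]
          intro h
          have h2 : (Option.some i : Option (Fin (k+1))) = Option.some i₀ :=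
            Finsupp.single_left_injective (by omega : d - 1 ≠ 0) h
          exact hne (by injection h2)
        · intro h
          exact absurd hmem h
      have hlast : coeff (Finsupp.single (Option.some i₀) (d - 1))
          (C ((-1 : K) ^ (d - 2) * b 0) * X Option.none * X (Option.some 0) ^ (d - 2)) = 0 := by
        rw [mul_assoc, coeff_C_mul, coeff_X_mul', if_neg, mul_zero]
        simp [Finsupp.single_apply]
      rw [hsum, hlast, add_zero] at hco
      have he : ((-1 : K) ^ (d - 2) / ((d - 1 : ℕ) : K)) ≠ 0 :=
        div_ne_zero (pow_ne_zero _ (neg_ne_zero.mpr one_ne_zero))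
          (Nat.cast_ne_zero.mpr (by omega))
      exact (mul_ne_zero he (hb i₀)) hco
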